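/- A graph is 2-edge bottlenecked if and only if any two distinct cycles intersect in at most one vertex (i.e., the graph is a cactus). -/

import Mathlib

open SimpleGraph

variable {V : Type}

/-- A set of vertices is connected if the induced subgraph is connected. -/
def ConnSet (G : SimpleGraph V) (X : Set V) : Prop := (G.induce X).Connected

/-- `G` is `n`-edge bottlenecked: any two disjoint connected vertex sets `X,Y`
admit a set of at most `n` edges meeting every `X,Y` path. -/
def EdgeBottlenecked (G : SimpleGraph V) (n : ℕ) : Prop :=
  ∀ X Y : Set V, Disjoint X Y → ConnSet G X → ConnSet G Y →
    ∃ S : Finset (Sym2 V), S.card ≤ n ∧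
      ∀ ⦃x y : V⦄ (p : G.Walk x y), x ∈ X → y ∈ Y → p.IsPath → ∃ e ∈ S, e ∈ p.edges

/-- `G` is `n`-point bottlenecked: any two disjoint connected vertex sets `X,Y`
admit a set of at most `n` vertices meeting every `X,Y` path. -/
def PointBottlenecked (G : SimpleGraph V) (n : ℕ) : Prop :=
  ∀ X Y : Set V, Disjoint X Y → ConnSet G X → ConnSet G Y →
    ∃ S : Finset V, S.card ≤ n ∧
      ∀ ⦃x y : V⦄ (p : G.Walk x y), x ∈ X → y ∈ Y → p.IsPath → ∃ v ∈ S, v ∈ p.support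

/-- An `n`-ladder: two disjoint connected poles `X,Y` and `n` rungs, i.e. `X,Y`
paths that are pairwise disjoint outside of `X ∪ Y`. -/
structure Ladder (G : SimpleGraph V) (n : ℕ) where
  X : Set V
  Y : Set V
  disj : Disjoint X Y
  connX : ConnSet G X
  connY : ConnSet G Y
  a : Fin n → V
  b : Fin n → V
  ha : ∀ i, a i ∈ X
  hb : ∀ i, b i ∈ Y
  p : (i : Fin n) → G.Walk (a i) (b i)
  isPath : ∀ i, (p i).IsPath
  rungsDisj : ∀ i j, i ≠ j → ∀ v, v ∈ (p i).support → v ∈ (p j).support → v ∈ X ∪ Y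

/-- `G` contains the dipole `D_k` as a minor: equivalently, `G` contains a `k`-ladder. -/
def HasDipoleMinor (G : SimpleGraph V) (k : ℕ) : Prop := Nonempty (Ladder G k)

/-- Two vertex sets are `M`-disjoint if every pair of points (one from each) is at
graph distance at least `M`. -/
def MDisjoint (G : SimpleGraph V) (M : ℕ) (X Y : Set V) : Prop :=
  ∀ x ∈ X, ∀ y ∈ Y, M ≤ G.dist x y

/-- `G` is `M`-fat `n`-bottlenecked: any two connected `M`-disjoint sets `X,Y` admit
at most `n` vertices (outside `X ∪ Y`) whose open `M`-neighborhood meets every `X,Y` path. -/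
def FatBottlenecked (G : SimpleGraph V) (M n : ℕ) : Prop :=
  ∀ X Y : Set V, ConnSet G X → ConnSet G Y → MDisjoint G M X Y →
    ∃ S : Finset V, S.card ≤ n ∧ (∀ s ∈ S, s ∉ X ∪ Y) ∧
      ∀ ⦃x y : V⦄ (p : G.Walk x y), x ∈ X → y ∈ Y → p.IsPath →
        ∃ v ∈ p.support, ∃ s ∈ S, G.dist v s < M

/-- An `M`-fat `n`-ladder: an `n`-ladder whose poles are `M`-disjoint and whose
rungs are pairwise `M`-disjoint. -/
structure FatLadder (G : SimpleGraph V) (M n : ℕ) extends Ladder G n where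
  polesFat : MDisjoint G M X Y
  rungsFat : ∀ i j, i ≠ j → ∀ u v, u ∈ (p i).support → v ∈ (p j).support → M ≤ G.dist u v

/-- `H` is a minor of `G`: branch sets in `G` (nonempty, connected, pairwise disjoint)
realize the vertices of `H`, and every edge of `H` is realized by an edge of `G`. -/
def IsMinor {W : Type} (G : SimpleGraph V) (H : SimpleGraph W) : Prop :=
  ∃ B : W → Set V, (∀ w, (B w).Nonempty) ∧ (∀ w, ConnSet G (B w)) ∧
    (∀ w w', w ≠ w' → Disjoint (B w) (B w')) ∧
    (∀ ⦃w w'⦄, H.Adj w w' → ∃ u ∈ B w, ∃ v ∈ B w', G.Adj u v)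

/-- `H` is an `M`-fat minor of `G`: a minor whose branch sets are pairwise `M`-disjoint
except where incident (adjacent) in `H`. -/
def IsFatMinor (G : SimpleGraph V) (M : ℕ) {W : Type} (H : SimpleGraph W) : Prop :=
  ∃ B : W → Set V, (∀ w, (B w).Nonempty) ∧ (∀ w, ConnSet G (B w)) ∧
    (∀ w w', w ≠ w' → Disjoint (B w) (B w')) ∧
    (∀ w w', w ≠ w' → ¬ H.Adj w w' → MDisjoint G M (B w) (B w')) ∧
    (∀ ⦃w w'⦄, H.Adj w w' → ∃ u ∈ B w, ∃ v ∈ B w', G.Adj u v)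

namespace TwoBottleneckAux

open SimpleGraph.Walk

variable {G : SimpleGraph V}

/-! ### Generic helpers -/

lemma connSet_single (a : V) : (G.induce ({a} : Set V)).Connected := by
  have : Nonempty ({a} : Set V) := ⟨⟨a, rfl⟩⟩
  constructor
  intro x y
  have : x = y := Subtype.ext (x.2.trans y.2.symm)
  exact this ▸ Reachable.refl _

/-- A walk between two vertices of a connected induced set, staying inside the set. -/
lemma walk_in_connSet {X : Set V} (hcX : (G.induce X).Connected)
    {x x' : V} (hx : x ∈ X) (hx' : x' ∈ X) :
    ∃ w : G.Walk x x', ∀ z ∈ w.support, z ∈ X := by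
  obtain ⟨wi⟩ := hcX.preconnected ⟨x, hx⟩ ⟨x', hx'⟩
  refine ⟨wi.map (Embedding.induce X).toHom, fun z hz => ?_⟩
  erw [Walk.support_map, List.mem_map] at hz
  obtain ⟨⟨z', hz'⟩, _, rfl⟩ := hz
  exact hz'

/-! ### Cycle building (backward direction) -/

lemma build_cycle {SY SA : Set V} (hdisj : ∀ z ∈ SA, z ∉ SY)
    {a1 y1 y2 a2 : V} (h1 : G.Adj a1 y1) (h2 : G.Adj y2 a2)
    {Yp : G.Walk y1 y2} (hYp : Yp.IsPath) (hYs : ∀ z ∈ Yp.support, z ∈ SY)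
    {Ap : G.Walk a2 a1} (hAp : Ap.IsPath) (hAs : ∀ z ∈ Ap.support, z ∈ SA)
    (hne : s(a1, y1) ≠ s(y2, a2)) :
    (Walk.cons h1 (Yp.append (Walk.cons h2 Ap))).IsCycle := by
  rw [Walk.cons_isCycle_iff]
  constructor
  · rw [Walk.isPath_def, Walk.support_append, Walk.support_cons, List.tail_cons]
    exact hYp.support_nodup.append hAp.support_nodup
      (fun z hz hz' => hdisj z (hAs z hz') (hYs z hz))
  · intro he
    rw [Walk.edges_append, Walk.edges_cons, List.mem_append, List.mem_cons] at he
    rcases he with he | he | he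
    · exact hdisj a1 (hAs a1 Ap.end_mem_support) (hYs a1 (Yp.fst_mem_support_of_mem_edges he))
    · exact hne he
    · exact hdisj y1 (hAs y1 (Ap.snd_mem_support_of_mem_edges he)) (hYs y1 Yp.start_mem_support)

/-- There cannot be three distinct `A`-`Y` crossing edges under the cactus hypothesis. -/
lemma no_three_cross
    (hcact : ∀ (u v : V) (c₁ : G.Walk u u) (c₂ : G.Walk v v), c₁.IsCycle → c₂.IsCycle →
        c₁.toSubgraph.edgeSet ≠ c₂.toSubgraph.edgeSet →
        (c₁.toSubgraph ⊓ c₂.toSubgraph).verts.Subsingleton)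
    {A Y : Set V} (hAY : ∀ z ∈ A, z ∉ Y)
    (hApath : ∀ a ∈ A, ∀ a' ∈ A, ∃ P : G.Walk a a', P.IsPath ∧ ∀ z ∈ P.support, z ∈ A)
    (hYpath : ∀ y ∈ Y, ∀ y' ∈ Y, ∃ P : G.Walk y y', P.IsPath ∧ ∀ z ∈ P.support, z ∈ Y)
    {a1 a2 a3 y1 y2 y3 : V} (ha1 : a1 ∈ A) (ha2 : a2 ∈ A) (ha3 : a3 ∈ A)
    (hy1 : y1 ∈ Y) (hy2 : y2 ∈ Y) (hy3 : y3 ∈ Y)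
    (h1 : G.Adj a1 y1) (h2 : G.Adj a2 y2) (h3 : G.Adj a3 y3)
    (h12 : s(a1, y1) ≠ s(a2, y2)) (h13 : s(a1, y1) ≠ s(a3, y3))
    (h23 : s(a2, y2) ≠ s(a3, y3)) : False := by
  obtain ⟨Yp12, hYp12, hYs12⟩ := hYpath y1 hy1 y2 hy2
  obtain ⟨Ap12, hAp12, hAs12⟩ := hApath a2 ha2 a1 ha1
  obtain ⟨Yp13, hYp13, hYs13⟩ := hYpath y1 hy1 y3 hy3
  obtain ⟨Ap13, hAp13, hAs13⟩ := hApath a3 ha3 a1 ha1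
  have hne12 : s(a1, y1) ≠ s(y2, a2) := by
    intro h
    rcases Sym2.eq_iff.mp h with ⟨rfl, rfl⟩ | ⟨rfl, rfl⟩
    · exact hAY a1 ha1 hy2
    · exact h12 rfl
  have hne13 : s(a1, y1) ≠ s(y3, a3) := by
    intro h
    rcases Sym2.eq_iff.mp h with ⟨rfl, rfl⟩ | ⟨rfl, rfl⟩
    · exact hAY a1 ha1 hy3
    · exact h13 rfl
  have cyc12 := build_cycle hAY h1 h2.symm hYp12 hYs12 hAp12 hAs12 hne12
  have cyc13 := build_cycle hAY h1 h3.symm hYp13 hYs13 hAp13 hAs13 hne13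
  set C12 := Walk.cons h1 (Yp12.append (Walk.cons h2.symm Ap12)) with hC12
  set C13 := Walk.cons h1 (Yp13.append (Walk.cons h3.symm Ap13)) with hC13
  have he2mem : s(a2, y2) ∈ C12.edges := by
    rw [hC12, Walk.edges_cons, Walk.edges_append, Walk.edges_cons]
    refine List.mem_cons_of_mem _ (List.mem_append_right _ ?_)
    rw [Sym2.eq_swap]
    exact List.mem_cons_self
  have he2not : s(a2, y2) ∉ C13.edges := by
    rw [hC13, Walk.edges_cons, Walk.edges_append, Walk.edges_cons]
    intro h
    rcases List.mem_cons.mp h with h | h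
    · exact h12 h.symm
    rcases List.mem_append.mp h with h | h
    · exact hAY a2 ha2 (hYs13 a2 (Yp13.fst_mem_support_of_mem_edges h))
    rcases List.mem_cons.mp h with h | h
    · rcases Sym2.eq_iff.mp h with ⟨rfl, rfl⟩ | ⟨rfl, rfl⟩
      · exact hAY a2 ha2 hy3
      · exact h23 rfl
    · exact hAY y2 (hAs13 y2 (Ap13.snd_mem_support_of_mem_edges h)) hy2
  have hneSets : C12.toSubgraph.edgeSet ≠ C13.toSubgraph.edgeSet := by
    rw [Walk.edgeSet_toSubgraph, Walk.edgeSet_toSubgraph]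
    intro h
    have hm : s(a2, y2) ∈ C12.edgeSet := he2mem
    rw [h] at hm
    exact he2not hm
  have hsub := hcact a1 a1 C12 C13 cyc12 cyc13 hneSets
  have hy1mem12 : y1 ∈ C12.support := by
    rw [hC12, Walk.support_cons]
    exact List.mem_cons_of_mem _ (Walk.start_mem_support _)
  have hy1mem13 : y1 ∈ C13.support := by
    rw [hC13, Walk.support_cons]
    exact List.mem_cons_of_mem _ (Walk.start_mem_support _)
  have : a1 = y1 := by
    apply hsub
    · rw [Subgraph.verts_inf]
      exact ⟨C12.start_mem_verts_toSubgraph, C13.start_mem_verts_toSubgraph⟩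
    · rw [Subgraph.verts_inf]
      exact ⟨(C12.mem_verts_toSubgraph).mpr hy1mem12, (C13.mem_verts_toSubgraph).mpr hy1mem13⟩
  exact hAY a1 ha1 (this ▸ hy1)



/-- The backward direction: the cactus property implies 2-edge-bottlenecked. -/
lemma backward
    (hcact : ∀ (u v : V) (c₁ : G.Walk u u) (c₂ : G.Walk v v), c₁.IsCycle → c₂.IsCycle →
        c₁.toSubgraph.edgeSet ≠ c₂.toSubgraph.edgeSet →
        (c₁.toSubgraph ⊓ c₂.toSubgraph).verts.Subsingleton)
    (X Y : Set V) (hdXY : Disjoint X Y)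
    (hcX : (G.induce X).Connected) (hcY : (G.induce Y).Connected) :
    ∃ S : Finset (Sym2 V), S.card ≤ 2 ∧
      ∀ ⦃x y : V⦄ (p : G.Walk x y), x ∈ X → y ∈ Y → p.IsPath → ∃ e ∈ S, e ∈ p.edges := by
  classical
  set A : Set V := {v | ∃ x ∈ X, ∃ w : G.Walk x v, ∀ z ∈ w.support, z ∉ Y} with hA
  have hXA : ∀ x ∈ X, x ∈ A := by
    intro x hx
    refine ⟨x, hx, Walk.nil, ?_⟩
    intro z hz
    rw [Walk.support_nil, List.mem_singleton] at hz
    subst hz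
    exact Set.disjoint_left.mp hdXY hx
  have hAY : ∀ z ∈ A, z ∉ Y := by
    rintro z ⟨x, hx, w, hw⟩
    exact hw z w.end_mem_support
  have hAclosed : ∀ a ∈ A, ∀ b, G.Adj a b → b ∉ Y → b ∈ A := by
    rintro a ⟨x, hx, w, hw⟩ b hab hbY
    refine ⟨x, hx, w.concat hab, ?_⟩
    intro z hz
    rw [Walk.support_concat, List.mem_append, List.mem_singleton] at hz
    rcases hz with hz | rfl
    · exact hw z hz
    · exact hbY
  have hAext : ∀ a ∈ A, ∀ {c : V} (w : G.Walk a c), (∀ z ∈ w.support, z ∉ Y) → c ∈ A := by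
    rintro a ⟨x, hx, w0, hw0⟩ c w hw
    refine ⟨x, hx, w0.append w, ?_⟩
    intro z hz
    rw [Walk.mem_support_append_iff] at hz
    rcases hz with hz | hz
    · exact hw0 z hz
    · exact hw z hz
  have hApath : ∀ a ∈ A, ∀ a' ∈ A, ∃ P : G.Walk a a', P.IsPath ∧ ∀ z ∈ P.support, z ∈ A := by
    rintro a ha a' ha'
    obtain ⟨x, hx, w, hw⟩ := ha
    obtain ⟨x', hx', w', hw'⟩ := ha'
    obtain ⟨wX, hwX⟩ := walk_in_connSet hcX hx hx'
    have haA : a ∈ A := ⟨x, hx, w, hw⟩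
    set W : G.Walk a a' := (w.reverse.append wX).append w' with hW
    have hWavoid : ∀ z ∈ W.support, z ∉ Y := by
      intro z hz
      rw [hW, Walk.mem_support_append_iff, Walk.mem_support_append_iff] at hz
      rcases hz with (hz | hz) | hz
      · exact hw z (by rwa [Walk.support_reverse, List.mem_reverse] at hz)
      · exact Set.disjoint_left.mp hdXY (hwX z hz)
      · exact hw' z hz
    have hWmem : ∀ z ∈ W.support, z ∈ A := by
      intro z hz
      refine hAext a haA (W.takeUntil z hz) ?_
      intro t ht
      exact hWavoid t (W.support_takeUntil_subset hz ht)
    refine ⟨W.bypass, W.bypass_isPath, ?_⟩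
    intro z hz
    exact hWmem z (W.support_bypass_subset hz)
  have hYpath : ∀ y ∈ Y, ∀ y' ∈ Y, ∃ P : G.Walk y y', P.IsPath ∧ ∀ z ∈ P.support, z ∈ Y := by
    intro y hy y' hy'
    obtain ⟨w, hw⟩ := walk_in_connSet hcY hy hy'
    refine ⟨w.bypass, w.bypass_isPath, fun z hz => hw z (w.support_bypass_subset hz)⟩
  set cS : Set (Sym2 V) := {e | ∃ a yy, a ∈ A ∧ yy ∈ Y ∧ G.Adj a yy ∧ e = s(a, yy)} with hcS
  have hcross : ∀ {x y : V} (p : G.Walk x y), x ∈ A → y ∈ Y → ∃ e ∈ cS, e ∈ p.edges := by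
    intro x y p hx hy
    obtain ⟨d, hd, hfst, hsnd⟩ := p.exists_boundary_dart A hx (fun h => hAY y h hy)
    have hsY : d.snd ∈ Y := by
      by_contra h
      exact hsnd (hAclosed d.fst hfst d.snd d.adj h)
    exact ⟨d.edge, ⟨d.fst, d.snd, hfst, hsY, d.adj, rfl⟩, List.mem_map_of_mem (f := Dart.edge) hd⟩
  have hno3 : ∀ e ∈ cS, ∀ f ∈ cS, ∀ g ∈ cS, e ≠ f → e ≠ g → f ≠ g → False := by
    rintro e ⟨a1, y1, ha1, hy1, hadj1, rfl⟩ f ⟨a2, y2, ha2, hy2, hadj2, rfl⟩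
      g ⟨a3, y3, ha3, hy3, hadj3, rfl⟩ hef heg hfg
    exact no_three_cross hcact hAY hApath hYpath ha1 ha2 ha3 hy1 hy2 hy3
      hadj1 hadj2 hadj3 hef heg hfg
  by_cases hef : ∃ e ∈ cS, ∃ f ∈ cS, e ≠ f
  · obtain ⟨e, he, f, hf, hef⟩ := hef
    refine ⟨{e, f}, ?_, ?_⟩
    · exact (Finset.card_insert_le _ _).trans (by simp)
    · intro x y p hx hy _
      obtain ⟨g, hgcS, hgp⟩ := hcross p (hXA x hx) hy
      refine ⟨g, ?_, hgp⟩
      by_contra hg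
      simp only [Finset.mem_insert, Finset.mem_singleton, not_or] at hg
      exact hno3 e he f hf g hgcS hef (Ne.symm hg.1) (Ne.symm hg.2)
  · push_neg at hef
    by_cases hne : ∃ e, e ∈ cS
    · obtain ⟨e, he⟩ := hne
      refine ⟨{e}, by simp, ?_⟩
      intro x y p hx hy _
      obtain ⟨g, hgcS, hgp⟩ := hcross p (hXA x hx) hy
      refine ⟨g, ?_, hgp⟩
      rw [Finset.mem_singleton]
      exact (hef e he g hgcS).symm
    · refine ⟨∅, by simp, ?_⟩
      intro x y p hx hy _
      obtain ⟨g, hgcS, _⟩ := hcross p (hXA x hx) hy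
      exact absurd ⟨g, hgcS⟩ hne



/-! ### Forward direction -/

lemma mem_rotate_support [DecidableEq V] {v q u : V} {c : G.Walk v v} (hu : u ∈ c.support)
    (hq : q ∈ c.support) : q ∈ (c.rotate u hu).support := by
  rw [← Walk.take_spec c hu, Walk.mem_support_append_iff] at hq
  rw [Walk.rotate, Walk.mem_support_append_iff]
  exact hq.symm

lemma end_mem_tail_support {a b : V} (w : G.Walk a b) (hab : a ≠ b) :
    b ∈ w.support.tail := by
  have h := w.end_mem_support
  rw [w.support_eq_cons, List.mem_cons] at h
  rcases h with h | h
  · exact absurd h.symm hab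
  · exact h

lemma cycle_split_paths [DecidableEq V] {p : V} {c : G.Walk p p} (hc : c.IsCycle) {q : V}
    (hq : q ∈ c.support) (hqp : q ≠ p) :
    (c.takeUntil q hq).IsPath ∧ (c.dropUntil q hq).IsPath := by
  have hT : c.support.tail.Nodup := hc.support_nodup
  have hsplit : (c.takeUntil q hq).support ++ (c.dropUntil q hq).support.tail = c.support := by
    rw [← Walk.support_append, Walk.take_spec]
  have hcons : c.support = p :: c.support.tail := c.support_eq_cons
  have htake_cons : (c.takeUntil q hq).support
      = p :: (c.takeUntil q hq).support.tail := Walk.support_eq_cons _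
  have hTsplit : c.support.tail
      = (c.takeUntil q hq).support.tail ++ (c.dropUntil q hq).support.tail := by
    have h2 := hsplit
    rw [htake_cons, hcons, List.cons_append] at h2
    simpa using (congrArg List.tail h2).symm
  have htailnodup : ((c.takeUntil q hq).support.tail
      ++ (c.dropUntil q hq).support.tail).Nodup := hTsplit ▸ hT
  have hnd1 : (c.takeUntil q hq).support.tail.Nodup := (List.nodup_append'.mp htailnodup).1
  have hnd2 : (c.dropUntil q hq).support.tail.Nodup := (List.nodup_append'.mp htailnodup).2.1
  have hdisj : ∀ z ∈ (c.takeUntil q hq).support.tail,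
      z ∉ (c.dropUntil q hq).support.tail := fun z hz hz' =>
    (List.nodup_append'.mp htailnodup).2.2 hz hz'
  have hqtake : q ∈ (c.takeUntil q hq).support.tail :=
    end_mem_tail_support _ (Ne.symm hqp)
  have hpdrop : p ∈ (c.dropUntil q hq).support.tail :=
    end_mem_tail_support _ hqp
  constructor
  · rw [Walk.isPath_def, htake_cons, List.nodup_cons]
    exact ⟨fun hpmem => hdisj p hpmem hpdrop, hnd1⟩
  · rw [Walk.isPath_def, Walk.support_eq_cons, List.nodup_cons]
    exact ⟨fun hqmem => hdisj q hqtake hqmem, hnd2⟩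

/-- Lemma B: extract an initial segment of a path from a non-`V1` start
to the first `V1`-vertex. -/
lemma prefix_extract {V1 : Set V} :
    ∀ {s t : V} (w : G.Walk s t), w.IsPath → s ∉ V1 → t ∈ V1 →
    ∃ b ∈ V1, ∃ R : G.Walk s b, R.IsPath ∧ (∀ z ∈ R.support, z ≠ b → z ∉ V1) ∧
      (∀ z ∈ R.support, z ∈ w.support) := by
  intro s t w
  induction w with
  | nil => intro _ hs ht; exact absurd ht hs
  | @cons s s₁ t h w' ih =>
    intro hp hs ht
    by_cases h1 : s₁ ∈ V1
    · refine ⟨s₁, h1, Walk.cons h Walk.nil, ?_, ?_, ?_⟩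
      · simp [Walk.isPath_def, h.ne]
      · intro z hz hzb
        simp only [Walk.support_cons, Walk.support_nil, List.mem_cons,
          List.not_mem_nil, or_false] at hz
        rcases hz with rfl | rfl
        · exact hs
        · exact absurd rfl hzb
      · intro z hz
        simp only [Walk.support_cons, Walk.support_nil, List.mem_cons,
          List.not_mem_nil, or_false] at hz
        rcases hz with rfl | rfl
        · exact Walk.start_mem_support _
        · rw [Walk.support_cons]; exact List.mem_cons_of_mem _ w'.start_mem_support
    · obtain ⟨b, hb, R', hR'p, hR'c, hR's⟩ := ih hp.of_cons h1 ht
      have hsns : s ∉ w'.support := (Walk.cons_isPath_iff _ _).mp hp |>.2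
      refine ⟨b, hb, Walk.cons h R', ?_, ?_, ?_⟩
      · rw [Walk.cons_isPath_iff]
        exact ⟨hR'p, fun hmem => hsns (hR's s hmem)⟩
      · intro z hz hzb
        rw [Walk.support_cons, List.mem_cons] at hz
        rcases hz with rfl | hz
        · exact hs
        · exact hR'c z hz hzb
      · intro z hz
        rw [Walk.support_cons, List.mem_cons] at hz
        rw [Walk.support_cons, List.mem_cons]
        rcases hz with rfl | hz
        · exact Or.inl rfl
        · exact Or.inr (hR's z hz)

/-- Lemma A: from a path between `V1`-vertices containing an edge outside `E1`,
extract a path between two distinct `V1` vertices all of whose edges avoid `E1`. -/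
lemma segment_extract {V1 : Set V} {E1 : Set (Sym2 V)}
    (hEV : ∀ f ∈ E1, ∀ z, z ∈ f → z ∈ V1) :
    ∀ {s t : V} (w : G.Walk s t), w.IsPath → s ∈ V1 → t ∈ V1 →
    (∃ f ∈ w.edges, f ∉ E1) →
    ∃ a ∈ V1, ∃ b ∈ V1, a ≠ b ∧ ∃ R : G.Walk a b, R.IsPath ∧ ∀ f ∈ R.edges, f ∉ E1 := by
  intro s t w
  induction w with
  | nil => rintro _ _ _ ⟨f, hf, _⟩; simp at hf
  | @cons s s₁ t h w' ih =>
    intro hp hs ht hwit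
    by_cases h1 : s₁ ∈ V1
    · by_cases hfe : s(s, s₁) ∈ E1
      · obtain ⟨f, hf, hfE⟩ := hwit
        rw [Walk.edges_cons, List.mem_cons] at hf
        rcases hf with rfl | hf
        · exact absurd hfe hfE
        · exact ih hp.of_cons h1 ht ⟨f, hf, hfE⟩
      · refine ⟨s, hs, s₁, h1, h.ne, Walk.cons h Walk.nil, ?_, ?_⟩
        · simp [Walk.isPath_def, h.ne]
        · intro f hf
          simp only [Walk.edges_cons, Walk.edges_nil, List.mem_singleton] at hf
          subst hf
          exact hfe
    · obtain ⟨b, hb, R', hR'p, hR'c, hR's⟩ := prefix_extract w' hp.of_cons h1 ht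
      have hsns : s ∉ w'.support := (Walk.cons_isPath_iff _ _).mp hp |>.2
      have hsb : s ≠ b := fun hsb => hsns (hsb ▸ hR's b R'.end_mem_support)
      refine ⟨s, hs, b, hb, hsb, Walk.cons h R', ?_, ?_⟩
      · rw [Walk.cons_isPath_iff]
        exact ⟨hR'p, fun hmem => hsns (hR's s hmem)⟩
      · intro f hf
        rw [Walk.edges_cons, List.mem_cons] at hf
        rcases hf with rfl | hf
        · exact fun hE => h1 (hEV _ hE s₁ (Sym2.mem_mk_right _ _))
        · intro hE
          induction f using Sym2.ind with
          | _ x y =>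
            have hx : x ∈ R'.support := R'.fst_mem_support_of_mem_edges hf
            have hy : y ∈ R'.support := R'.snd_mem_support_of_mem_edges hf
            have hxy : x ≠ y := by
              have : G.Adj x y := (Walk.edges_subset_edgeSet R' hf)
              exact this.ne
            by_cases hxb : x = b
            · have hyb : y ≠ b := fun hyb => hxy (hxb.trans hyb.symm)
              exact hR'c y hy hyb (hEV _ hE y (Sym2.mem_mk_right _ _))
            · exact hR'c x hx hxb (hEV _ hE x (Sym2.mem_mk_left _ _))

/-- Three pairwise edge-disjoint paths between distinct vertices contradict
2-edge-bottleneckedness. -/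
lemma three_paths (hB : EdgeBottlenecked G 2) {a b : V} (hab : a ≠ b)
    (P1 P2 P3 : G.Walk a b) (h1 : P1.IsPath) (h2 : P2.IsPath) (h3 : P3.IsPath)
    (d12 : ∀ f ∈ P1.edges, f ∉ P2.edges)
    (d13 : ∀ f ∈ P1.edges, f ∉ P3.edges)
    (d23 : ∀ f ∈ P2.edges, f ∉ P3.edges) : False := by
  classical
  obtain ⟨S, hS2, hhit⟩ := hB {a} {b} (by simpa using hab) (connSet_single a) (connSet_single b)
  obtain ⟨e1, he1S, he1⟩ := hhit P1 rfl rfl h1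
  obtain ⟨e2, he2S, he2⟩ := hhit P2 rfl rfl h2
  obtain ⟨e3, he3S, he3⟩ := hhit P3 rfl rfl h3
  have h12 : e1 ≠ e2 := fun h => d12 e1 he1 (h ▸ he2)
  have h13 : e1 ≠ e3 := fun h => d13 e1 he1 (h ▸ he3)
  have h23 : e2 ≠ e3 := fun h => d23 e2 he2 (h ▸ he3)
  have hsub : ({e1, e2, e3} : Finset (Sym2 V)) ⊆ S := by
    intro x hx
    simp only [Finset.mem_insert, Finset.mem_singleton] at hx
    rcases hx with rfl | rfl | rfl
    · exact he1S
    · exact he2S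
    · exact he3S
  have hcard : ({e1, e2, e3} : Finset (Sym2 V)).card = 3 := by
    rw [Finset.card_insert_of_notMem (by simp [h12, h13]),
      Finset.card_insert_of_notMem (by simp [h23]), Finset.card_singleton]
  have := (Finset.card_le_card hsub).trans hS2
  omega

/-- The key forward lemma. -/
lemma key [DecidableEq V] (hB : EdgeBottlenecked G 2) {u v p q : V} (c1 : G.Walk u u) (c2 : G.Walk v v)
    (hc1 : c1.IsCycle) (hc2 : c2.IsCycle) (hp1 : p ∈ c1.support) (hp2 : p ∈ c2.support)
    (hq1 : q ∈ c1.support) (hq2 : q ∈ c2.support) (hpq : p ≠ q)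
    {e : Sym2 V} (he2 : e ∈ c2.edges) (he1 : e ∉ c1.edges) : False := by
  classical
  set V1 : Set V := {z | z ∈ c1.support} with hV1
  set E1 : Set (Sym2 V) := {f | f ∈ c1.edges} with hE1
  have hEV : ∀ f ∈ E1, ∀ z, z ∈ f → z ∈ V1 := by
    intro f hf z hz
    induction f using Sym2.ind with
    | _ x y =>
      rcases Sym2.mem_iff.mp hz with rfl | rfl
      · exact c1.fst_mem_support_of_mem_edges hf
      · exact c1.snd_mem_support_of_mem_edges hf
  -- Find the path F between V1-vertices containing e
  set c2p := c2.rotate p hp2 with hc2p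
  have hcyc2p : c2p.IsCycle := hc2.rotate hp2
  have hq2p : q ∈ c2p.support := mem_rotate_support hp2 hq2
  have he2p : e ∈ c2p.edges := (Walk.rotate_edges c2 p hp2).mem_iff.mpr he2
  obtain ⟨htakeP, hdropP⟩ := cycle_split_paths hcyc2p hq2p hpq.symm
  have hesplit : e ∈ (c2p.takeUntil q hq2p).edges ∨ e ∈ (c2p.dropUntil q hq2p).edges := by
    rw [← List.mem_append, ← Walk.edges_append, Walk.take_spec]
    exact he2p
  have hseg : ∃ a ∈ V1, ∃ b ∈ V1, a ≠ b ∧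
      ∃ R : G.Walk a b, R.IsPath ∧ ∀ f ∈ R.edges, f ∉ E1 := by
    rcases hesplit with hmem | hmem
    · exact segment_extract hEV (c2p.takeUntil q hq2p) htakeP hp1 hq1 ⟨e, hmem, he1⟩
    · exact segment_extract hEV (c2p.dropUntil q hq2p) hdropP hq1 hp1 ⟨e, hmem, he1⟩
  obtain ⟨a, ha, b, hb, hab, R, hRp, hRe⟩ := hseg
  -- Split c1 at a and b
  set c1a := c1.rotate a ha with hc1a
  have hcyc1a : c1a.IsCycle := hc1.rotate ha
  have hb1 : b ∈ c1a.support := mem_rotate_support ha hb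
  obtain ⟨hP1, hP2'⟩ := cycle_split_paths hcyc1a hb1 (Ne.symm hab)
  set P1 := c1a.takeUntil b hb1 with hP1d
  set P2 := (c1a.dropUntil b hb1).reverse with hP2d
  have hP2 : P2.IsPath := hP2'.reverse
  have hedges1a : ∀ f, f ∈ c1a.edges → f ∈ E1 := by
    intro f hf
    exact (Walk.rotate_edges c1 a ha).mem_iff.mp hf
  have hnodup : c1a.edges.Nodup := hcyc1a.isTrail.edges_nodup
  have hedges_split : c1a.edges = P1.edges ++ (c1a.dropUntil b hb1).edges := by
    rw [← Walk.edges_append, Walk.take_spec]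
  have d12 : ∀ f ∈ P1.edges, f ∉ P2.edges := by
    intro f hf hf2
    rw [hP2d, Walk.edges_reverse, List.mem_reverse] at hf2
    rw [hedges_split] at hnodup
    exact (List.nodup_append'.mp hnodup).2.2 hf hf2
  have hP1E : ∀ f ∈ P1.edges, f ∈ E1 := fun f hf =>
    hedges1a f (hedges_split ▸ List.mem_append_left _ hf)
  have hP2E : ∀ f ∈ P2.edges, f ∈ E1 := by
    intro f hf
    rw [hP2d, Walk.edges_reverse, List.mem_reverse] at hf
    exact hedges1a f (hedges_split ▸ List.mem_append_right _ hf)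
  exact three_paths hB hab P1 P2 R hP1 hP2 hRp d12
    (fun f hf hf3 => hRe f hf3 (hP1E f hf))
    (fun f hf hf3 => hRe f hf3 (hP2E f hf))

end TwoBottleneckAux

/-- A graph is `2`-edge bottlenecked iff any two distinct cycles intersect in
at most one vertex (i.e. the graph is a cactus). -/
theorem twoBottlenecked_iff_cactus (G : SimpleGraph V) :
    EdgeBottlenecked G 2 ↔
      ∀ (u v : V) (c₁ : G.Walk u u) (c₂ : G.Walk v v), c₁.IsCycle → c₂.IsCycle →
        c₁.toSubgraph.edgeSet ≠ c₂.toSubgraph.edgeSet →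
        (c₁.toSubgraph ⊓ c₂.toSubgraph).verts.Subsingleton := by

  classical
  constructor
  · intro hB u v c1 c2 hc1 hc2 hne
    intro p hp q hq
    by_contra hpq
    rw [Subgraph.verts_inf, Set.mem_inter_iff, Walk.mem_verts_toSubgraph,
      Walk.mem_verts_toSubgraph] at hp hq
    have hna : ¬ ∀ e : Sym2 V, e ∈ c1.edges ↔ e ∈ c2.edges := by
      intro h
      apply hne
      rw [Walk.edgeSet_toSubgraph, Walk.edgeSet_toSubgraph]
      exact Set.ext fun e => h e
    obtain ⟨e, he⟩ := not_forall.mp hna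
    by_cases h1 : e ∈ c1.edges <;> by_cases h2' : e ∈ c2.edges
    · exact he ⟨fun _ => h2', fun _ => h1⟩
    · exact TwoBottleneckAux.key hB c2 c1 hc2 hc1 hp.2 hp.1 hq.2 hq.1 hpq h1 h2'
    · exact TwoBottleneckAux.key hB c1 c2 hc1 hc2 hp.1 hp.2 hq.1 hq.2 hpq h2' h1
    · exact he ⟨fun h => absurd h h1, fun h => absurd h h2'⟩
  · intro hcact X Y hd hX hY
    exact TwoBottleneckAux.backward hcact X Y hd hX hY
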